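/- Let H be a graph with at least one edge and r ≥ 2 an integer. There exists a constant c' = c'(H,r) > 1 such that for every graph G, if t is sufficiently large in terms of G (and H, r) and n ≤ (c')^t, then there exists an r-coloring of the edges of G[n] containing no monochromatic canonical copy of H[t]. -/

import Mathlib

/-- The `n`-blowup of a graph: each vertex is replaced by an independent set of `n` vertices,
and each edge by a complete bipartite graph between the corresponding sets. -/
def blowupGraph {V : Type} (G : SimpleGraph V) (n : ℕ) : SimpleGraph (V × Fin n) :=
  SimpleGraph.comap Prod.fst G

/-- The coloring `C` admits a monochromatic copy of `H` in `G`. -/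
def HasMonoCopy {V α : Type} (G : SimpleGraph V) (H : SimpleGraph α) {r : ℕ}
    (C : Sym2 V → Fin r) : Prop :=
  ∃ (f : α → V) (c : Fin r), Function.Injective f ∧
    ∀ a b, H.Adj a b → G.Adj (f a) (f b) ∧ C s(f a, f b) = c

/-- `G →_r H`: every `r`-coloring of the edges of `G` contains a monochromatic copy of `H`. -/
def ArrowsFor {V α : Type} (G : SimpleGraph V) (H : SimpleGraph α) (r : ℕ) : Prop :=
  ∀ C : Sym2 V → Fin r, HasMonoCopy G H C

/-- The coloring `C` of `G[n]` admits a monochromatic canonical copy of `H[t]`: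
an embedding `φ` of `H` into `G`, together with `t` blowup vertices `ψ a` in the part indexed
by `φ a` for each vertex `a` of `H`, all of whose blowup edges receive the same color `c`. -/
def HasMonoCanonicalBlowup {V α : Type} (G : SimpleGraph V) (H : SimpleGraph α)
    (n t r : ℕ) (C : Sym2 (V × Fin n) → Fin r) : Prop :=
  ∃ (φ : α → V) (ψ : α → Fin t → Fin n) (c : Fin r),
    Function.Injective φ ∧ (∀ a, Function.Injective (ψ a)) ∧
    ∀ a b, H.Adj a b → G.Adj (φ a) (φ b) ∧ ∀ i j, C s((φ a, ψ a i), (φ b, ψ b j)) = c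

/-- Every `r`-coloring of the edges of `G[n]` contains a monochromatic canonical copy of `H[t]`.
The blowup Ramsey number `B_r(G → H; t)` is the minimum such `n`. -/
def BlowupArrow {V α : Type} (G : SimpleGraph V) (H : SimpleGraph α) (r n t : ℕ) : Prop :=
  ∀ C : Sym2 (V × Fin n) → Fin r, HasMonoCanonicalBlowup G H n t r C

open Finset

/-- Fiber bound: the map (i,j) ↦ s(u i, v j) is at most 2-to-1 when u, v are injective. -/
lemma sym2_fiber_le_two {n t : ℕ} (u v : Fin t → Fin n)
    (hu : Function.Injective u) (hv : Function.Injective v) (b : Sym2 (Fin n)) :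
    ({p ∈ (univ : Finset (Fin t × Fin t)) | s(u p.1, v p.2) = b}).card ≤ 2 := by
  induction b using Sym2.inductionOn with
  | hf x y =>
    have := Finset.card_le_card_of_injOn
      (s := {p ∈ (univ : Finset (Fin t × Fin t)) | s(u p.1, v p.2) = s(x, y)})
      (f := fun p : Fin t × Fin t => decide (u p.1 = x))
      (t := (univ : Finset Bool)) (fun p _ => mem_univ _) ?_
    · simpa using this
    · intro p hp q hq hpq
      simp only [mem_coe, mem_filter, Sym2.eq_iff] at hp hq
      rw [decide_eq_decide] at hpq
      rcases hp.2 with ⟨h1, h2⟩ | ⟨h1, h2⟩ <;> rcases hq.2 with ⟨h3, h4⟩ | ⟨h3, h4⟩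
      · exact Prod.ext (hu (h1.trans h3.symm)) (hv (h2.trans h4.symm))
      · have hx : u q.1 = x := hpq.1 h1
        have hxy : x = y := hx.symm.trans h3
        exact Prod.ext (hu (h1.trans (hxy.trans h3.symm)))
          (hv (h2.trans (hxy.symm.trans h4.symm)))
      · have hx : u p.1 = x := hpq.2 h3
        have hxy : x = y := hx.symm.trans h1
        exact Prod.ext (hu (h1.trans (hxy.symm.trans h3.symm)))
          (hv (h2.trans (hxy.trans h4.symm)))
      · exact Prod.ext (hu (h1.trans h3.symm)) (hv (h2.trans h4.symm))

/-- Image size lower bound. -/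
lemma sym2_image_card {n t : ℕ} (u v : Fin t → Fin n)
    (hu : Function.Injective u) (hv : Function.Injective v) :
    t ^ 2 ≤ 2 * ((univ : Finset (Fin t × Fin t)).image
      (fun p => s(u p.1, v p.2))).card := by
  have h := Finset.card_le_mul_card_image (f := fun p : Fin t × Fin t => s(u p.1, v p.2))
    univ 2 (fun b _ => sym2_fiber_le_two u v hu hv b)
  simpa [sq] using h

/-- Constant-on-S colorings are few. -/
lemma const_filter_card {n : ℕ} (S : Finset (Sym2 (Fin n))) (c : Fin 2) :
    ({g ∈ (univ : Finset (Sym2 (Fin n) → Fin 2)) | ∀ e ∈ S, g e = c}).card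
      ≤ 2 ^ (Fintype.card (Sym2 (Fin n)) - S.card) := by
  classical
  have h := Finset.card_le_card_of_injOn
    (s := {g ∈ (univ : Finset (Sym2 (Fin n) → Fin 2)) | ∀ e ∈ S, g e = c})
    (f := fun (g : Sym2 (Fin n) → Fin 2) (e : {e // e ∈ Sᶜ}) => g e.1)
    (t := (univ : Finset ({e // e ∈ Sᶜ} → Fin 2))) (fun g _ => mem_univ _) ?_
  · calc _ ≤ _ := h
      _ = 2 ^ (Fintype.card (Sym2 (Fin n)) - S.card) := by
        rw [Finset.card_univ, Fintype.card_fun, Fintype.card_coe, Finset.card_compl,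
          Fintype.card_fin]
  · intro g1 hg1 g2 hg2 hgg
    simp only [mem_coe, mem_filter] at hg1 hg2
    funext e
    by_cases he : e ∈ S
    · rw [hg1.2 e he, hg2.2 e he]
    · exact congrFun hgg ⟨e, by simpa using he⟩

/-- Core lemma: existence of a 2-coloring of pairs from `Fin n` with no monochromatic
`t × t` grid, when `n^8 ≤ 2^t` and `t ≥ 3`. -/
lemma exists_good_coloring (n t : ℕ) (ht : 3 ≤ t) (hn : n ^ 8 ≤ 2 ^ t) :
    ∃ g : Sym2 (Fin n) → Fin 2, ∀ u v : Fin t → Fin n,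
      Function.Injective u → Function.Injective v →
      ∀ c : Fin 2, ¬ ∀ i j, g s(u i, v j) = c := by
  classical
  by_cases hcase : t ≤ n
  · -- counting argument
    set N := Fintype.card (Sym2 (Fin n)) with hN
    set m := t ^ 2 / 2 with hm
    -- image set
    let Simg : (Fin t → Fin n) → (Fin t → Fin n) → Finset (Sym2 (Fin n)) :=
      fun u v => (univ : Finset (Fin t × Fin t)).image (fun p => s(u p.1, v p.2))
    have hScard : ∀ u v : Fin t → Fin n, Function.Injective u → Function.Injective v →
        m ≤ (Simg u v).card := by
      intro u v hu hv
      have h := sym2_image_card u v hu hv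
      show m ≤ ((univ : Finset (Fin t × Fin t)).image (fun p => s(u p.1, v p.2))).card
      omega
    have hmN : m ≤ N := by
      have hinj : Function.Injective (Fin.castLE hcase) := Fin.castLE_injective hcase
      exact le_trans (hScard _ _ hinj hinj) (Finset.card_le_univ _)
    -- bad colorings
    set Bad : Finset (Sym2 (Fin n) → Fin 2) :=
      {g ∈ univ | ∃ u v : Fin t → Fin n, Function.Injective u ∧ Function.Injective v ∧
        ∃ c : Fin 2, ∀ i j, g s(u i, v j) = c} with hBad
    set I : Finset ((Fin t → Fin n) × (Fin t → Fin n) × Fin 2) :=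
      {x ∈ univ | Function.Injective x.1 ∧ Function.Injective x.2.1} with hI
    have hsub : Bad ⊆ I.biUnion (fun x =>
        {g ∈ univ | ∀ e ∈ Simg x.1 x.2.1, g e = x.2.2}) := by
      intro g hg
      rw [hBad, mem_filter] at hg
      obtain ⟨-, u, v, hu, hv, c, hc⟩ := hg
      refine Finset.mem_biUnion.2 ⟨⟨u, v, c⟩, ?_, ?_⟩
      · rw [hI, mem_filter]; exact ⟨mem_univ _, hu, hv⟩
      · rw [mem_filter]
        refine ⟨mem_univ _, fun e he => ?_⟩
        obtain ⟨p, -, rfl⟩ := Finset.mem_image.1 he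
        exact hc p.1 p.2
    have hBadCard : Bad.card ≤ (n ^ t * (n ^ t * 2)) * 2 ^ (N - m) := by
      calc Bad.card ≤ ∑ x ∈ I, ({g ∈ (univ : Finset (Sym2 (Fin n) → Fin 2)) |
            ∀ e ∈ Simg x.1 x.2.1, g e = x.2.2}).card :=
            le_trans (Finset.card_le_card hsub) (Finset.card_biUnion_le)
        _ ≤ ∑ x ∈ I, 2 ^ (N - m) := by
            refine Finset.sum_le_sum fun x hx => ?_
            rw [hI, mem_filter] at hx
            refine le_trans (const_filter_card _ _) ?_
            exact Nat.pow_le_pow_right (by norm_num)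
              (Nat.sub_le_sub_left (hScard _ _ hx.2.1 hx.2.2) N)
        _ = I.card * 2 ^ (N - m) := by rw [Finset.sum_const, smul_eq_mul]
        _ ≤ (n ^ t * (n ^ t * 2)) * 2 ^ (N - m) := by
            refine Nat.mul_le_mul_right _ ?_
            calc I.card ≤ (univ : Finset ((Fin t → Fin n) × (Fin t → Fin n) × Fin 2)).card :=
                  Finset.card_le_card (Finset.filter_subset _ _)
              _ = n ^ t * (n ^ t * 2) := by
                  simp [Fintype.card_fun]
    -- arithmetic: n^t * (n^t * 2) < 2^m
    have harith : n ^ t * (n ^ t * 2) < 2 ^ m := by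
      have h8 : (n ^ t * (n ^ t * 2)) ^ 8 < (2 ^ m) ^ 8 := by
        have e1 : (n ^ t * (n ^ t * 2)) ^ 8 = (n ^ 8) ^ (2 * t) * 2 ^ 8 := by ring
        have e2 : (2 ^ m : ℕ) ^ 8 = 2 ^ (8 * m) := by rw [← pow_mul, mul_comm]
        rw [e1, e2]
        have h1 : (n ^ 8) ^ (2 * t) * 2 ^ 8 ≤ (2 ^ t) ^ (2 * t) * 2 ^ 8 :=
          Nat.mul_le_mul_right _ (Nat.pow_le_pow_left hn _)
        refine lt_of_le_of_lt h1 ?_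
        rw [← pow_mul, ← pow_add]
        refine Nat.pow_lt_pow_right (by norm_num) ?_
        have ht2 : 9 ≤ t ^ 2 := by
          calc 9 = 3 ^ 2 := by norm_num
            _ ≤ t ^ 2 := Nat.pow_le_pow_left ht 2
        have : 2 * (t ^ 2 / 2) + 1 ≥ t ^ 2 := by omega
        have hoo : t * (2 * t) = 2 * t ^ 2 := by ring
        rw [hm]
        omega
      exact lt_of_pow_lt_pow_left₀ 8 (Nat.zero_le _) h8
    have hlt : Bad.card < Fintype.card (Sym2 (Fin n) → Fin 2) := by
      have : Fintype.card (Sym2 (Fin n) → Fin 2) = 2 ^ N := by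
        rw [Fintype.card_fun]; simp [hN]
      rw [this]
      calc Bad.card ≤ (n ^ t * (n ^ t * 2)) * 2 ^ (N - m) := hBadCard
        _ < 2 ^ m * 2 ^ (N - m) := Nat.mul_lt_mul_of_pos_right harith (Nat.pow_pos (by norm_num))
        _ = 2 ^ N := by rw [← pow_add]; congr 1; omega
    have : ∃ g, g ∉ Bad := by
      by_contra hcon
      push_neg at hcon
      have : (univ : Finset (Sym2 (Fin n) → Fin 2)) ⊆ Bad := fun g _ => hcon g
      have := Finset.card_le_card this
      rw [Finset.card_univ] at this
      omega
    obtain ⟨g, hg⟩ := this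
    refine ⟨g, fun u v hu hv c hc => hg ?_⟩
    rw [hBad, mem_filter]
    exact ⟨mem_univ _, u, v, hu, hv, c, hc⟩
  · -- no injective map Fin t → Fin n
    refine ⟨fun _ => 0, fun u v hu hv c hc => ?_⟩
    have := Fintype.card_le_of_injective u hu
    simp only [Fintype.card_fin] at this
    omega

/-- Souza's lower bound. For `H` with at least one edge and `r ≥ 2`, there is
a constant `c' = c'(H,r) > 1` such that for every graph `G`, if `t` is sufficiently large in
terms of `G` (and `H`, `r`) and `n ≤ (c')^t`, then some `r`-coloring of the edges of `G[n]`
contains no monochromatic canonical copy of `H[t]`. -/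
theorem blowup_ramsey_lower_bound
    (α : Type) [Fintype α] (H : SimpleGraph α) (hH : ∃ x y, H.Adj x y)
    (r : ℕ) (hr : 2 ≤ r) :
    ∃ c' : ℝ, 1 < c' ∧ ∀ (V : Type) [Fintype V] (G : SimpleGraph V),
      ∃ t₀ : ℕ, ∀ t : ℕ, t₀ ≤ t → ∀ n : ℕ, (n : ℝ) ≤ c' ^ t →
        ∃ C : Sym2 (V × Fin n) → Fin r, ¬ HasMonoCanonicalBlowup G H n t r C := by
  refine ⟨(2 : ℝ) ^ ((1 : ℝ) / 8), ?_, ?_⟩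
  · rw [show (1 : ℝ) = (2 : ℝ) ^ (0 : ℝ) by simp]
    exact Real.rpow_lt_rpow_left_iff (by norm_num) |>.2 (by norm_num)
  · intro V _ G
    refine ⟨3, fun t ht n hn => ?_⟩
    -- derive n ^ 8 ≤ 2 ^ t in ℕ
    have hpow : (n : ℝ) ^ 8 ≤ (2 : ℝ) ^ t := by
      have h1 : (n : ℝ) ^ 8 ≤ (((2 : ℝ) ^ ((1 : ℝ) / 8)) ^ t) ^ 8 :=
        pow_le_pow_left₀ (by positivity) hn 8
      refine le_trans h1 (le_of_eq ?_)
      rw [← Real.rpow_natCast ((2:ℝ) ^ ((1:ℝ)/8)) t, ← Real.rpow_mul (by norm_num)]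
      rw [← Real.rpow_natCast ((2:ℝ) ^ ((1:ℝ)/8 * t)) 8, ← Real.rpow_mul (by norm_num)]
      rw [← Real.rpow_natCast (2:ℝ) t]
      congr 1
      push_cast
      ring
    have hnat : n ^ 8 ≤ 2 ^ t := by exact_mod_cast hpow
    obtain ⟨g, hg⟩ := exists_good_coloring n t ht hnat
    refine ⟨fun e => Fin.castLE hr (g (Sym2.map Prod.snd e)), ?_⟩
    rintro ⟨φ, ψ, c, hφ, hψ, hadj⟩
    obtain ⟨x, y, hxy⟩ := hH
    obtain ⟨-, hmono⟩ := hadj x y hxy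
    have ht0 : 0 < t := by omega
    have hc2 : ∀ i j, g s(ψ x i, ψ y j) = g s(ψ x ⟨0, ht0⟩, ψ y ⟨0, ht0⟩) := by
      intro i j
      have h1 := hmono i j
      have h2 := hmono ⟨0, ht0⟩ ⟨0, ht0⟩
      simp only [Sym2.map_pair_eq] at h1 h2
      exact Fin.castLE_injective hr (h1.trans h2.symm)
    exact hg (ψ x) (ψ y) (hψ x) (hψ y) _ hc2
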